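/- For every N ≥ 1, (4^k − 1)/3 ≤ |F ∩ [0, N)| where 4^k ≤ N < 4^{k+1}, and consequently |F ∩ [0,N)|/N ≥ 1/9 − o(1); in particular liminf |F ∩ [0,N)|/N ≥ 1/9. -/

import Mathlib

open Filter Topology

def F : Set ℕ := {n | ∃ k, 3 * 4 ^ k ≤ n ∧ n < 4 ^ (k + 1)}

lemma geom_aux (k : ℕ) : 3 * ∑ j ∈ Finset.range k, 4 ^ j + 1 = 4 ^ k := by
  induction k with
  | zero => simp
  | succ k ih =>
    rw [Finset.sum_range_succ, mul_add, pow_succ]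
    omega

lemma main_count (N k : ℕ) (h1 : 4 ^ k ≤ N) (h2 : N < 4 ^ (k + 1)) :
    ∑ j ∈ Finset.range k, 4 ^ j + (N - 3 * 4 ^ k) ≤ (F ∩ Set.Iio N).ncard := by
  classical
  set T : Finset ℕ :=
    ((Finset.range k).biUnion fun j => Finset.Ico (3 * 4 ^ j) (4 ^ (j + 1))) ∪
      Finset.Ico (3 * 4 ^ k) N with hT
  have hsub : ↑T ⊆ F ∩ Set.Iio N := by
    intro n hn
    simp only [hT, Finset.coe_union, Set.mem_union, Finset.mem_coe, Finset.mem_biUnion,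
      Finset.mem_Ico, Finset.mem_range] at hn
    rcases hn with ⟨j, hj, hlo, hhi⟩ | ⟨hlo, hhi⟩
    · refine ⟨⟨j, hlo, hhi⟩, ?_⟩
      have : (4:ℕ) ^ (j + 1) ≤ 4 ^ k := Nat.pow_le_pow_right (by norm_num) hj
      exact lt_of_lt_of_le hhi (le_trans this h1)
    · exact ⟨⟨k, hlo, lt_trans hhi h2⟩, hhi⟩
  have hfin : (F ∩ Set.Iio N).Finite := (Set.finite_Iio N).inter_of_right _
  have hle := Set.ncard_le_ncard hsub hfin
  rw [Set.ncard_coe_finset] at hle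
  refine le_trans ?_ hle
  have hdisj : Disjoint ((Finset.range k).biUnion fun j => Finset.Ico (3 * 4 ^ j) (4 ^ (j + 1)))
      (Finset.Ico (3 * 4 ^ k) N) := by
    rw [Finset.disjoint_left]
    intro n hn hn'
    simp only [Finset.mem_biUnion, Finset.mem_Ico, Finset.mem_range] at hn hn'
    rcases hn with ⟨j, hj, _, hhi⟩
    have h4 : (4:ℕ) ^ (j + 1) ≤ 4 ^ k := Nat.pow_le_pow_right (by norm_num) hj
    have : n < 4 ^ k := lt_of_lt_of_le hhi h4
    have : n < 3 * 4 ^ k := lt_of_lt_of_le this (by nlinarith [Nat.one_le_two_pow (n := k)])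
    omega
  have hbi : (((Finset.range k).biUnion fun j => Finset.Ico (3 * 4 ^ j) (4 ^ (j + 1)))).card =
      ∑ j ∈ Finset.range k, 4 ^ j := by
    rw [Finset.card_biUnion]
    · refine Finset.sum_congr rfl fun j _ => ?_
      rw [Nat.card_Ico, pow_succ]
      omega
    · intro i hi j hj hij
      simp only [Finset.mem_coe, Finset.mem_range] at hi hj
      rw [Function.onFun, Finset.disjoint_left]
      intro n hn hn'
      simp only [Finset.mem_Ico] at hn hn'
      rcases Nat.lt_or_ge i j with h | h
      · have : (4:ℕ) ^ (i + 1) ≤ 4 ^ j := Nat.pow_le_pow_right (by norm_num) h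
        have h3 : (1:ℕ) ≤ 4 ^ j := Nat.one_le_two_pow.trans (Nat.pow_le_pow_left (by norm_num) j)
        omega
      · have hji : j < i := by omega
        have : (4:ℕ) ^ (j + 1) ≤ 4 ^ i := Nat.pow_le_pow_right (by norm_num) hji
        have h3 : (1:ℕ) ≤ 4 ^ i := Nat.one_le_two_pow.trans (Nat.pow_le_pow_left (by norm_num) i)
        omega
  rw [hT, Finset.card_union_of_disjoint hdisj, hbi, Nat.card_Ico]

lemma key_bound (N : ℕ) (hN : 1 ≤ N) : N ≤ 9 * (F ∩ Set.Iio N).ncard + 9 := by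
  set k := Nat.log 4 N with hk
  have h1 : 4 ^ k ≤ N := Nat.pow_log_le_self 4 (by omega)
  have h2 : N < 4 ^ (k + 1) := Nat.lt_pow_succ_log_self (by norm_num) N
  have hc := main_count N k h1 h2
  have hg := geom_aux k
  rw [pow_succ] at h2
  omega

theorem stmt_19 :
    (∀ N k : ℕ, 1 ≤ N → 4 ^ k ≤ N → N < 4 ^ (k + 1) →
      (4 ^ k - 1) / 3 ≤ (F ∩ Set.Iio N).ncard) ∧
    (1 / 9 : ℝ) ≤ Filter.liminf (fun N : ℕ => ((F ∩ Set.Iio N).ncard : ℝ) / N) Filter.atTop := by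
  constructor
  · intro N k _ h1 h2
    have hc := main_count N k h1 h2
    have hg := geom_aux k
    omega
  · set u : ℕ → ℝ := fun N => ((F ∩ Set.Iio N).ncard : ℝ) / N with hu
    set g : ℕ → ℝ := fun N => 1 / 9 - 1 / N with hg
    have hg_tendsto : Tendsto g atTop (𝓝 (1 / 9)) := by
      have h0 : Tendsto (fun N : ℕ => (1 : ℝ) / N) atTop (𝓝 0) :=
        tendsto_one_div_atTop_nhds_zero_nat
      have h1 : Tendsto (fun N : ℕ => (1:ℝ)/9 - 1/N) atTop (𝓝 (1/9 - 0)) :=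
        tendsto_const_nhds.sub h0
      simpa [hg] using h1
    have hev : g ≤ᶠ[atTop] u := by
      filter_upwards [Filter.eventually_ge_atTop 1] with N hN
      have hkey := key_bound N hN
      have hNpos : (0:ℝ) < N := by exact_mod_cast hN
      have hc : (N : ℝ) ≤ 9 * ((F ∩ Set.Iio N).ncard : ℝ) + 9 := by exact_mod_cast hkey
      simp only [hu, hg]
      rw [div_sub_div _ _ (by norm_num : (9:ℝ) ≠ 0) hNpos.ne',
        div_le_div_iff₀ (by positivity) hNpos]
      nlinarith [mul_le_mul_of_nonneg_right hc hNpos.le]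
    have hub : Filter.IsBoundedUnder (· ≥ ·) atTop g :=
      hg_tendsto.isBoundedUnder_ge
    have hvb : Filter.IsCoboundedUnder (· ≥ ·) atTop u := by
      refine Filter.IsBoundedUnder.isCoboundedUnder_ge
        (Filter.isBoundedUnder_of ⟨(1:ℝ), fun N => ?_⟩)
      simp only [hu]
      have hcard : (F ∩ Set.Iio N).ncard ≤ N := by
        have h1 : (F ∩ Set.Iio N).ncard ≤ (Set.Iio N).ncard :=
          Set.ncard_le_ncard Set.inter_subset_right (Set.finite_Iio N)
        have h2 : (Set.Iio N).ncard = N := by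
          rw [← Finset.coe_range, Set.ncard_coe_finset, Finset.card_range]
        omega
      rcases Nat.eq_zero_or_pos N with h | h
      · simp [h]
      · rw [div_le_one (by exact_mod_cast h)]
        exact_mod_cast hcard
    calc (1/9 : ℝ) = liminf g atTop := hg_tendsto.liminf_eq.symm
      _ ≤ liminf u atTop := Filter.liminf_le_liminf hev hub hvb
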